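/- Let T be a DFS tree of a connected undirected graph G rooted at r, and let u ≠ r be a vertex of G. Then u is a cut vertex of G if and only if u has a child v in T such that no descendant of v (including v itself) has an edge in G to a strict ancestor of u. -/

import Mathlib

open SimpleGraph

universe u₁ u₂

variable {V : Type u₁} {W : Type u₂}

/-- `H` is a minor of `G`: there is a branch decomposition, i.e. a partial map
assigning to some vertices of `G` a vertex of `H`, whose branch sets are
nonempty and connected, and such that every edge of `H` is realized by an
edge of `G` between the corresponding branch sets. -/
def IsMinorOf (H : SimpleGraph W) (G : SimpleGraph V) : Prop :=
  ∃ f : V → Option W,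
    (∀ w : W, (G.induce {v | f v = some w}).Connected) ∧
    (∀ w₁ w₂ : W, H.Adj w₁ w₂ →
      ∃ v₁ v₂ : V, f v₁ = some w₁ ∧ f v₂ = some w₂ ∧ G.Adj v₁ v₂)

/-- The cone over `G`: add a new apex vertex adjacent to all vertices of `G`. -/
def cone (G : SimpleGraph V) : SimpleGraph (Option V) :=
  SimpleGraph.fromRel (fun a b =>
    a = none ∨ ∃ u v : V, a = some u ∧ b = some v ∧ G.Adj u v)

/-- A graph is planar iff it has neither a `K₅` nor a `K₃,₃` minor (Wagner). -/
def Planar (G : SimpleGraph V) : Prop :=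
  ¬ IsMinorOf (⊤ : SimpleGraph (Fin 5)) G ∧
  ¬ IsMinorOf (completeBipartiteGraph (Fin 3) (Fin 3)) G

/-- A graph is outerplanar iff the cone over it is planar (equivalently, it
has a planar embedding with all vertices on the outer face). -/
def Outerplanar (G : SimpleGraph V) : Prop := Planar (cone G)

/-- `v` is a cut vertex of `G`: `G` is connected but deleting `v` disconnects it. -/
def IsCutVertex (G : SimpleGraph V) (v : V) : Prop :=
  G.Connected ∧ ¬ (G.induce {u | u ≠ v}).Connected

/-- `G` is biconnected: connected with no cut vertex. -/
def Biconnected (G : SimpleGraph V) : Prop :=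
  G.Connected ∧ ∀ v : V, ¬ IsCutVertex G v

/-- Degree of a vertex, as the cardinality of its neighbour set. -/
noncomputable def deg (G : SimpleGraph V) (v : V) : ℕ := (G.neighborSet v).ncard

/-- Two `a`-`b` walks are internally vertex-disjoint if they share no
vertices other than `a` and `b`. -/
def InternallyDisjoint {G : SimpleGraph V} {a b : V} (p q : G.Walk a b) : Prop :=
  ∀ w : V, w ∈ p.support → w ∈ q.support → w = a ∨ w = b

/-- A chain of `G` with endpoints `a` and `b`, represented by the path `p`
from `a` to `b`: all internal vertices have degree two, and either both
endpoints have degree greater than two (a path chain), or the chain is a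
cycle of degree-two vertices, represented by a Hamiltonian-on-its-support
path between two adjacent vertices `a` and `b` of the cycle. -/
def IsGraphChain (G : SimpleGraph V) {a b : V} (p : G.Walk a b) : Prop :=
  p.IsPath ∧ 2 ≤ p.length ∧
    (∀ v ∈ p.support, v ≠ a → v ≠ b → deg G v = 2) ∧
    ((2 < deg G a ∧ 2 < deg G b) ∨
      (G.Adj a b ∧ ∀ v ∈ p.support, deg G v = 2))

/-- The graph on the endpoints of the edges in `E'`, with edge set `E'`. -/
def graphOn (E' : Set (Sym2 V)) :
    SimpleGraph {v : V | ∃ e ∈ E', v ∈ e} :=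
  (SimpleGraph.fromEdgeSet E').induce {v : V | ∃ e ∈ E', v ∈ e}

/-- `u` is an ancestor of `v` in the tree `T` rooted at `r`: it lies on the
(unique) path from `r` to `v`. -/
def IsAncestor (T : SimpleGraph V) (r u v : V) : Prop :=
  ∀ p : T.Walk r v, p.IsPath → u ∈ p.support

/-- `T` is a DFS tree of `G` rooted at `r`: a spanning tree of `G` such that
every edge of `G` joins two vertices comparable in the ancestor order
(i.e. all non-tree edges are back edges). -/
def IsDFSTree (G T : SimpleGraph V) (r : V) : Prop :=
  T ≤ G ∧ T.IsTree ∧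
    ∀ u v : V, G.Adj u v → IsAncestor T r u v ∨ IsAncestor T r v u

section TreeAux

variable [DecidableEq V] {T : SimpleGraph V} {r : V}

/-- The unique path from `r` to `x` in a tree. -/
noncomputable def tp (hT : T.IsTree) (r x : V) : T.Walk r x :=
  (hT.existsUnique_path r x).exists.choose

lemma tp_isPath (hT : T.IsTree) (r x : V) : (tp hT r x).IsPath :=
  (hT.existsUnique_path r x).exists.choose_spec

lemma tp_unique (hT : T.IsTree) {x : V} (p : T.Walk r x) (hp : p.IsPath) :
    p = tp hT r x :=
  (hT.existsUnique_path r x).unique hp (tp_isPath hT r x)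

lemma isAncestor_iff (hT : T.IsTree) {x y : V} :
    IsAncestor T r x y ↔ x ∈ (tp hT r y).support := by
  constructor
  · exact fun h => h _ (tp_isPath hT r y)
  · intro h p hp
    rw [tp_unique hT p hp]; exact h

lemma anc_self (x : V) : IsAncestor T r x x := fun p _ => p.end_mem_support

lemma anc_root (x : V) : IsAncestor T r r x := fun p _ => p.start_mem_support

lemma takeUntil_eq (hT : T.IsTree) {x y : V} (hx : x ∈ (tp hT r y).support) :
    (tp hT r y).takeUntil x hx = tp hT r x :=
  tp_unique hT _ ((tp_isPath hT r y).takeUntil hx)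

lemma anc_of_mem_dropUntil (hT : T.IsTree) {x y z : V} (hx : x ∈ (tp hT r y).support)
    (hz : z ∈ ((tp hT r y).dropUntil x hx).support) : IsAncestor T r x z := by
  have hq : (((tp hT r y).takeUntil x hx).append
      (((tp hT r y).dropUntil x hx).takeUntil z hz)).IsPath := by
    have h2 : ((((tp hT r y).takeUntil x hx).append
        (((tp hT r y).dropUntil x hx).takeUntil z hz)).append
        (((tp hT r y).dropUntil x hx).dropUntil z hz)).IsPath := by
      rw [← Walk.append_assoc, Walk.take_spec, Walk.take_spec]
      exact tp_isPath hT r y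
    exact h2.of_append_left
  rw [isAncestor_iff hT, ← tp_unique hT _ hq, Walk.mem_support_append_iff]
  exact Or.inl (Walk.end_mem_support _)

lemma anc_trans (hT : T.IsTree) {x y z : V} (hxy : IsAncestor T r x y)
    (hyz : IsAncestor T r y z) : IsAncestor T r x z := by
  rw [isAncestor_iff hT] at hxy hyz ⊢
  rw [← takeUntil_eq hT hyz] at hxy
  exact Walk.support_takeUntil_subset _ hyz hxy

lemma anc_antisymm (hT : T.IsTree) {x y : V} (hxy : IsAncestor T r x y)
    (hyx : IsAncestor T r y x) : x = y := by
  by_contra hne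
  rw [isAncestor_iff hT] at hxy hyx
  rw [← takeUntil_eq hT hxy] at hyx
  have hnd := (tp_isPath hT r y).support_nodup
  rw [← Walk.take_spec (tp hT r y) hxy, Walk.support_append] at hnd
  have hdisj := List.disjoint_of_nodup_append hnd
  have hy2 : y ∈ ((tp hT r y).dropUntil x hxy).support.tail := by
    have h3 := Walk.end_mem_support ((tp hT r y).dropUntil x hxy)
    rw [Walk.support_eq_cons] at h3
    rcases List.mem_cons.mp h3 with h | h
    · exact absurd h (Ne.symm hne)
    · exact h
  exact hdisj hyx hy2

lemma anc_comparable (hT : T.IsTree) {x z y : V} (hx : IsAncestor T r x y)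
    (hz : IsAncestor T r z y) : IsAncestor T r x z ∨ IsAncestor T r z x := by
  rw [isAncestor_iff hT] at hx hz
  rw [← Walk.take_spec (tp hT r y) hx, Walk.mem_support_append_iff] at hz
  rcases hz with h | h
  · right
    rw [takeUntil_eq hT hx] at h
    exact (isAncestor_iff hT).mpr h
  · left
    exact anc_of_mem_dropUntil hT hx h

lemma anc_of_child (hT : T.IsTree) {u v z : V} (hadj : T.Adj u v)
    (huv : IsAncestor T r u v) (hz : IsAncestor T r z v) (hzv : z ≠ v) :
    IsAncestor T r z u := by
  have hvne : v ∉ (tp hT r u).support := fun h =>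
    hadj.ne (anc_antisymm hT huv ((isAncestor_iff hT).mpr h))
  have hpath : ((tp hT r u).concat hadj).IsPath := by
    rw [Walk.isPath_def, Walk.concat_eq_append, Walk.support_append]
    simp [List.nodup_append, (tp_isPath hT r u).support_nodup, hvne]
    exact fun a ha hav => hvne (hav ▸ ha)
  have heq := tp_unique hT _ hpath
  rw [isAncestor_iff hT, ← heq, Walk.concat_eq_append, Walk.mem_support_append_iff] at hz
  rcases hz with h | h
  · exact (isAncestor_iff hT).mpr h
  · simp only [Walk.support_cons, Walk.support_nil, List.mem_cons, List.mem_singleton] at h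
    rcases h with h | h
    · subst h; exact anc_self z
    · simp only [List.not_mem_nil, or_false] at h
      exact absurd h hzv

end TreeAux


section WalkAux

lemma reachable_induce_of_walk {G : SimpleGraph V} {s : Set V} :
    ∀ {x y : V} (p : G.Walk x y), (∀ z ∈ p.support, z ∈ s) →
      ∀ (hx : x ∈ s) (hy : y ∈ s), (G.induce s).Reachable ⟨x, hx⟩ ⟨y, hy⟩ := by
  intro x y p
  induction p with
  | nil => intro _ hx hy; exact Reachable.refl _
  | @cons a b c h q ih =>
    intro hs ha hc
    have hb : b ∈ s := hs b (by simp)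
    have hadj : (G.induce s).Adj ⟨a, ha⟩ ⟨b, hb⟩ := h
    exact hadj.reachable.trans (ih (fun z hz => hs z (by simp [hz])) hb hc)

lemma walk_of_induce {G : SimpleGraph V} {s : Set V} {x y : s}
    (p : (G.induce s).Walk x y) :
    ∃ q : G.Walk x.1 y.1, ∀ z ∈ q.support, z ∈ s := by
  refine ⟨p.map (Embedding.induce s).toHom, ?_⟩
  intro z hz
  replace hz : z ∈ List.map (Embedding.induce (G := G) s).toHom p.support := by
    rw [← Walk.support_map]; exact hz
  obtain ⟨w, _, rfl⟩ := List.mem_map.mp hz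
  exact w.2

lemma support_mapLe {G G' : SimpleGraph V} (h : G ≤ G') {a b : V} (p : G.Walk a b) :
    (p.mapLe h).support = p.support := by
  rw [Walk.mapLe, Walk.support_map]
  exact List.map_id _

end WalkAux


/-- A non-root vertex `u` of a DFS tree `T` of a connected graph `G` is a cut
vertex of `G` iff `u` has a child `v` in `T` such that no descendant of `v`
(including `v`) has an edge of `G` to a strict ancestor of `u`. -/
theorem nonroot_is_cut_vertex_iff [Fintype V] {G T : SimpleGraph V} {r u : V}
    (hG : G.Connected) (hT : IsDFSTree G T r) (hu : u ≠ r) :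
    IsCutVertex G u ↔
      ∃ v : V, T.Adj u v ∧ IsAncestor T r u v ∧
        ¬ ∃ w a : V, IsAncestor T r v w ∧ IsAncestor T r a u ∧ a ≠ u ∧ G.Adj w a := by
  classical
  obtain ⟨hle, htree, hback⟩ := hT
  constructor
  · rintro ⟨-, hnc⟩
    by_contra hne
    push_neg at hne
    apply hnc
    have hrs : r ∈ {x : V | x ≠ u} := Ne.symm hu
    have hmain : ∀ (x : V) (hx : x ∈ {x : V | x ≠ u}),
        (G.induce {x : V | x ≠ u}).Reachable ⟨x, hx⟩ ⟨r, hrs⟩ := by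
      intro x hx
      by_cases hux : u ∈ (tp htree r x).support
      · -- u is an ancestor of x; use the child v of u towards x
        have hxneu : u ≠ x := fun h => hx h.symm
        obtain ⟨v, hadj, q, hd⟩ :=
          Walk.exists_eq_cons_of_ne hxneu ((tp htree r x).dropUntil u hux)
        have hvmem : v ∈ ((tp htree r x).dropUntil u hux).support := by
          rw [hd]; simp
        have huv : IsAncestor T r u v := anc_of_mem_dropUntil htree hux hvmem
        have hvx : IsAncestor T r v x := by
          rw [isAncestor_iff htree]
          exact Walk.support_dropUntil_subset _ hux hvmem
        obtain ⟨w, a, hvw, hau, hane, hadjwa⟩ := hne v hadj huv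
        -- descendants of v are not u
        have hdesc_ne : ∀ z : V, IsAncestor T r v z → z ≠ u := by
          intro z hvz hzu
          subst hzu
          exact hadj.ne (anc_antisymm htree huv hvz)
        have hvw' : v ∈ (tp htree r w).support := (isAncestor_iff htree).mp hvw
        have hvx' : v ∈ (tp htree r x).support := (isAncestor_iff htree).mp hvx
        -- walk from x to w through v, inside the subtree of v
        let W1 : T.Walk x w :=
          (((tp htree r x).dropUntil v hvx').reverse).append ((tp htree r w).dropUntil v hvw')
        -- full G-walk from x to r
        let W : G.Walk x r :=
          (W1.mapLe hle).append (Walk.cons hadjwa (((tp htree r a).reverse).mapLe hle))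
        have hWs : ∀ z ∈ W.support, z ∈ {x : V | x ≠ u} := by
          intro z hz
          rw [Walk.mem_support_append_iff] at hz
          rcases hz with hz | hz
          · rw [support_mapLe, Walk.mem_support_append_iff, Walk.support_reverse,
              List.mem_reverse] at hz
            rcases hz with hz | hz
            · exact hdesc_ne z (anc_of_mem_dropUntil htree hvx' hz)
            · exact hdesc_ne z (anc_of_mem_dropUntil htree hvw' hz)
          · rw [Walk.support_cons, List.mem_cons] at hz
            rcases hz with hz | hz
            · subst hz
              exact hdesc_ne z (anc_of_mem_dropUntil htree hvw'
                (Walk.end_mem_support _))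
            · rw [support_mapLe, Walk.support_reverse, List.mem_reverse] at hz
              intro hzu
              subst hzu
              exact hane (anc_antisymm htree hau ((isAncestor_iff htree).mpr hz))
        exact reachable_induce_of_walk W hWs hx hrs
      · -- u not on the tree path from r to x
        have hWs : ∀ z ∈ (((tp htree r x).reverse).mapLe hle).support,
            z ∈ {x : V | x ≠ u} := by
          intro z hz
          rw [support_mapLe, Walk.support_reverse, List.mem_reverse] at hz
          exact fun hzu => hux (hzu ▸ hz)
        exact reachable_induce_of_walk _ hWs hx hrs
    rw [connected_iff_exists_forall_reachable]
    exact ⟨⟨r, hrs⟩, fun w => (hmain w.1 w.2).symm⟩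
  · rintro ⟨v, hadj, huv, hno⟩
    refine ⟨hG, fun hc => ?_⟩
    have hvs : v ∈ {x : V | x ≠ u} := hadj.ne'
    have hrs : r ∈ {x : V | x ≠ u} := Ne.symm hu
    obtain ⟨p⟩ := hc.preconnected ⟨v, hvs⟩ ⟨r, hrs⟩
    obtain ⟨q, hq⟩ := walk_of_induce p
    have key : ∀ {x y : V} (p : G.Walk x y), y = r → IsAncestor T r v x →
        (∀ z ∈ p.support, z ≠ u) → False := by
      intro x y p
      induction p with
      | nil =>
        intro hyr hvr _
        apply hu
        have h1 : v = r := anc_antisymm htree (hyr ▸ hvr) (anc_root v)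
        exact anc_antisymm htree (h1 ▸ huv) (anc_root u)
      | @cons a b c h q ih =>
        intro hyr hva hzu
        have hbu : b ≠ u := hzu b (by simp)
        by_cases hvb : IsAncestor T r v b
        · exact ih hyr hvb (fun z hz => hzu z (by simp [hz]))
        · rcases hback a b h with hab | hba
          · exact hvb (anc_trans htree hva hab)
          · rcases anc_comparable htree hba hva with hbv | hvb'
            · have hbne : b ≠ v := fun e => hvb (by rw [e]; exact anc_self v)
              exact hno ⟨a, b, hva, anc_of_child htree hadj huv hbv hbne, hbu, h⟩
            · exact hvb hvb'
    exact key q rfl (anc_self v) hq
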